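/- Let V be a free A-module of rank r, let ϖ_0 : V ⊗_A B → B be a surjective B-linear map whose restriction V → B, a ↦ ϖ_0(a⊗1), is also surjective, and let e′_0, …, e′_{r−1} ∈ V satisfy ϖ_0(e′_k⊗1) = w^k for 0 ≤ k ≤ r−1. Let ζ ∈ ℂ be a primitive r-th root of unity and let σ be the A-algebra automorphism of B determined by σ(w) = ζ·w, acting on V ⊗_A B as id_V⊗σ. Then the intersection ⋂_{l=0}^{r−1} ker(σ^{−l}∘ϖ_0∘(id_V⊗σ^l)) equals { Σ_{k=0}^{r−1} e′_k⊗b_k : b_k ∈ (w^{N−k})/(w^N) for each k }, and its ℂ-dimension is r(r−1)/2. -/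

import Mathlib

open Polynomial TensorProduct

noncomputable section

/-- The ring `A = ℂ[z]/(z^m)`. -/
def Amod (m : ℕ) : Type :=
  Polynomial ℂ ⧸ Ideal.span {(Polynomial.X : Polynomial ℂ) ^ m}

instance (m : ℕ) : CommRing (Amod m) :=
  inferInstanceAs (CommRing (Polynomial ℂ ⧸ Ideal.span {(Polynomial.X : Polynomial ℂ) ^ m}))

instance (m : ℕ) : Algebra ℂ (Amod m) :=
  inferInstanceAs (Algebra ℂ (Polynomial ℂ ⧸ Ideal.span {(Polynomial.X : Polynomial ℂ) ^ m}))

/-- The ring `B = ℂ[w]/(w^N)` with `N = m*r - r + 1`. -/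
def Bmod (m r : ℕ) : Type :=
  Polynomial ℂ ⧸ Ideal.span {(Polynomial.X : Polynomial ℂ) ^ (m * r - r + 1)}

instance (m r : ℕ) : CommRing (Bmod m r) :=
  inferInstanceAs
    (CommRing (Polynomial ℂ ⧸ Ideal.span {(Polynomial.X : Polynomial ℂ) ^ (m * r - r + 1)}))

instance (m r : ℕ) : Algebra ℂ (Bmod m r) :=
  inferInstanceAs
    (Algebra ℂ (Polynomial ℂ ⧸ Ideal.span {(Polynomial.X : Polynomial ℂ) ^ (m * r - r + 1)}))

/-- The class of a polynomial in `A = ℂ[z]/(z^m)`. -/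
def Amod.mk (m : ℕ) (p : Polynomial ℂ) : Amod m :=
  (Ideal.Quotient.mk (Ideal.span {(Polynomial.X : Polynomial ℂ) ^ m}) p : _)

/-- The class of a polynomial in `B = ℂ[w]/(w^N)`. -/
def Bmod.mk (m r : ℕ) (p : Polynomial ℂ) : Bmod m r :=
  (Ideal.Quotient.mk (Ideal.span {(Polynomial.X : Polynomial ℂ) ^ (m * r - r + 1)}) p : _)

/-- The element `z ∈ A`. -/
def Amod.z (m : ℕ) : Amod m := Amod.mk m Polynomial.X

/-- The element `w ∈ B`. -/
def Bmod.w (m r : ℕ) : Bmod m r := Bmod.mk m r Polynomial.X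

/-- The coefficient of `w^j` in the unique polynomial representative of degree `< N` of an
element of `B = ℂ[w]/(w^N)` (for `j < N`). -/
noncomputable def Bmod.coeff (m r : ℕ) (j : ℕ) (b : Bmod m r) : ℂ :=
  ((Quotient.out
      (show Polynomial ℂ ⧸ Ideal.span {(Polynomial.X : Polynomial ℂ) ^ (m * r - r + 1)} from b))
      %ₘ (Polynomial.X ^ (m * r - r + 1))).coeff j

/-- The canonical map `ℂ[z]/(z^m) → ℂ[w]/(w^N)`, `z ↦ w^r` (raw version). -/
noncomputable def AtoB0 (m r : ℕ) [NeZero m] :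
    (Polynomial ℂ ⧸ Ideal.span {(Polynomial.X : Polynomial ℂ) ^ m}) →+*
      (Polynomial ℂ ⧸ Ideal.span {(Polynomial.X : Polynomial ℂ) ^ (m * r - r + 1)}) :=
  Ideal.Quotient.lift (Ideal.span {(Polynomial.X : Polynomial ℂ) ^ m})
    ((Ideal.Quotient.mk (Ideal.span {(Polynomial.X : Polynomial ℂ) ^ (m * r - r + 1)})).comp
      (if 1 ≤ r then (Polynomial.aeval ((Polynomial.X : Polynomial ℂ) ^ r)).toRingHom
       else (Polynomial.aeval (0 : Polynomial ℂ)).toRingHom))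
    (by
      intro a ha
      rw [Ideal.mem_span_singleton] at ha
      obtain ⟨c, rfl⟩ := ha
      rw [map_mul]
      apply mul_eq_zero_of_left
      have hm : 1 ≤ m := Nat.one_le_iff_ne_zero.mpr (NeZero.ne m)
      by_cases h : 1 ≤ r
      · rw [if_pos h, map_pow, RingHom.comp_apply, AlgHom.toRingHom_eq_coe, RingHom.coe_coe,
          Polynomial.aeval_X, ← map_pow, ← pow_mul, Ideal.Quotient.eq_zero_iff_mem,
          Ideal.mem_span_singleton]
        have h1 : r ≤ r * m := Nat.le_mul_of_pos_right r (by omega)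
        have h2 : m * r = r * m := Nat.mul_comm m r
        exact pow_dvd_pow _ (by omega)
      · rw [if_neg h, map_pow, RingHom.comp_apply, AlgHom.toRingHom_eq_coe, RingHom.coe_coe,
          Polynomial.aeval_X, map_zero, zero_pow (NeZero.ne m)])

/-- The canonical map `A → B`, `z ↦ w^r`. -/
noncomputable def AtoB (m r : ℕ) [NeZero m] : Amod m →+* Bmod m r := AtoB0 m r

noncomputable instance (m r : ℕ) [NeZero m] : Algebra (Amod m) (Bmod m r) :=
  (AtoB m r).toAlgebra

end

section Tower

noncomputable instance (m r : ℕ) [NeZero m] : IsScalarTower ℂ (Amod m) (Bmod m r) :=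
  IsScalarTower.of_algebraMap_eq fun c => by
    have h2 : algebraMap (Amod m) (Bmod m r) (algebraMap ℂ (Amod m) c) =
        AtoB0 m r (Ideal.Quotient.mk (Ideal.span {(Polynomial.X : Polynomial ℂ) ^ m})
          (Polynomial.C c)) := rfl
    rw [h2, AtoB0, Ideal.Quotient.lift_mk, RingHom.comp_apply]
    by_cases h : 1 ≤ r
    · rw [if_pos h]
      simp only [AlgHom.toRingHom_eq_coe, RingHom.coe_coe, Polynomial.aeval_C]
      rfl
    · rw [if_neg h]
      simp only [AlgHom.toRingHom_eq_coe, RingHom.coe_coe, Polynomial.aeval_C]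
      rfl

end Tower

noncomputable section

namespace S6

variable {m r : ℕ}

lemma mkB_surj : Function.Surjective (Bmod.mk m r) :=
  Ideal.Quotient.mk_surjective

lemma mkB_add (p q : Polynomial ℂ) : Bmod.mk m r (p + q) = Bmod.mk m r p + Bmod.mk m r q :=
  map_add (Ideal.Quotient.mk _) p q

lemma mkB_mul (p q : Polynomial ℂ) : Bmod.mk m r (p * q) = Bmod.mk m r p * Bmod.mk m r q :=
  map_mul (Ideal.Quotient.mk _) p q

lemma mkB_sub (p q : Polynomial ℂ) : Bmod.mk m r (p - q) = Bmod.mk m r p - Bmod.mk m r q :=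
  map_sub (Ideal.Quotient.mk _) p q

lemma mkB_sum {ι : Type*} (s : Finset ι) (f : ι → Polynomial ℂ) :
    Bmod.mk m r (∑ i ∈ s, f i) = ∑ i ∈ s, Bmod.mk m r (f i) :=
  map_sum (Ideal.Quotient.mk _) f s

lemma w_pow (t : ℕ) : Bmod.w m r ^ t = Bmod.mk m r (X ^ t) :=
  (map_pow (Ideal.Quotient.mk (Ideal.span {(X : Polynomial ℂ) ^ (m * r - r + 1)})) X t).symm

lemma mkB_eq_zero {p : Polynomial ℂ} :
    Bmod.mk m r p = 0 ↔ (X : Polynomial ℂ) ^ (m * r - r + 1) ∣ p := by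
  exact Ideal.Quotient.eq_zero_iff_mem.trans Ideal.mem_span_singleton

lemma mkB_eq_iff {p q : Polynomial ℂ} :
    Bmod.mk m r p = Bmod.mk m r q ↔ (X : Polynomial ℂ) ^ (m * r - r + 1) ∣ p - q := by
  rw [← sub_eq_zero, ← mkB_sub, mkB_eq_zero]

lemma algebraMapB_eq (c : ℂ) : algebraMap ℂ (Bmod m r) c = Bmod.mk m r (C c) := by
  rw [show (algebraMap ℂ (Bmod m r) c : Bmod m r)
      = algebraMap ℂ (Polynomial ℂ ⧸ Ideal.span {(X : Polynomial ℂ) ^ (m * r - r + 1)}) c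
      from rfl,
    IsScalarTower.algebraMap_apply ℂ (Polynomial ℂ), Ideal.Quotient.algebraMap_eq,
    Polynomial.algebraMap_eq]
  rfl

lemma smulB_eq (c : ℂ) (b : Bmod m r) : c • b = algebraMap ℂ (Bmod m r) c * b :=
  Algebra.smul_def c b

lemma smulB_mk (c : ℂ) (p : Polynomial ℂ) :
    c • Bmod.mk m r p = Bmod.mk m r (C c * p) := by
  rw [smulB_eq, algebraMapB_eq, mkB_mul]

lemma w_pow_N : Bmod.w m r ^ (m * r - r + 1) = 0 := by
  rw [w_pow, mkB_eq_zero]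

/-- membership in the ideal generated by `w^t`. -/
lemma mem_span_w_pow {t : ℕ} (b : Bmod m r) :
    b ∈ Ideal.span {Bmod.w m r ^ t} ↔ ∃ q, b = Bmod.mk m r (X ^ t * q) := by
  constructor
  · intro hb
    obtain ⟨a, ha⟩ := Ideal.mem_span_singleton'.mp hb
    obtain ⟨q, rfl⟩ := mkB_surj (m := m) (r := r) a
    exact ⟨q, by rw [← ha, w_pow, ← mkB_mul, mul_comm]⟩
  · rintro ⟨q, rfl⟩
    exact Ideal.mem_span_singleton'.mpr ⟨Bmod.mk m r q, by rw [w_pow, ← mkB_mul, mul_comm]⟩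

/-- c * w^k = 0 iff c ∈ (w^(N-k)), for k ≤ N. -/
lemma mul_w_pow_eq_zero_iff {k : ℕ} (hk : k ≤ m * r - r + 1) (c : Bmod m r) :
    c * Bmod.w m r ^ k = 0 ↔ c ∈ Ideal.span {Bmod.w m r ^ (m * r - r + 1 - k)} := by
  obtain ⟨p, rfl⟩ := mkB_surj (m := m) (r := r) c
  rw [mem_span_w_pow]
  constructor
  · intro h
    rw [w_pow, ← mkB_mul, mkB_eq_zero] at h
    obtain ⟨s, hs⟩ := h
    refine ⟨s, ?_⟩
    have hXk : (X : Polynomial ℂ) ^ k ≠ 0 := pow_ne_zero _ X_ne_zero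
    have : p * X ^ k = X ^ (m * r - r + 1 - k) * s * X ^ k := by
      rw [hs, mul_assoc, mul_comm s, ← mul_assoc, ← pow_add]
      congr 2
      omega
    rw [mul_right_cancel₀ hXk this]
  · rintro ⟨q, hq⟩
    rw [hq, w_pow, ← mkB_mul, mkB_eq_zero]
    exact ⟨q, by rw [mul_assoc, mul_comm q, ← mul_assoc, ← pow_add]; congr 2; omega⟩


/-- the ℂ-linear map (Fin (N-t) → ℂ) → B, a ↦ Σ a i • w^(t+i). -/
def Gmap (m r t : ℕ) : (Fin (m * r - r + 1 - t) → ℂ) →ₗ[ℂ] Bmod m r where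
  toFun a := ∑ i, a i • Bmod.w m r ^ (t + (i : ℕ))
  map_add' a b := by simp [add_smul, Finset.sum_add_distrib]
  map_smul' c a := by simp [Finset.smul_sum, smul_smul]

lemma Gmap_apply (t : ℕ) (a : Fin (m * r - r + 1 - t) → ℂ) :
    Gmap m r t a = Bmod.mk m r (∑ i : Fin (m * r - r + 1 - t), C (a i) * X ^ (t + (i : ℕ))) := by
  rw [Gmap, LinearMap.coe_mk, AddHom.coe_mk, mkB_sum]
  refine Finset.sum_congr rfl fun i _ => ?_
  rw [w_pow, smulB_mk]

lemma Gmap_injective (t : ℕ) : Function.Injective (Gmap m r t) := by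
  rw [injective_iff_map_eq_zero]
  intro a ha
  rw [Gmap_apply, mkB_eq_zero, X_pow_dvd_iff] at ha
  funext i
  have hi : t + (i : ℕ) < m * r - r + 1 := by omega
  have := ha (t + (i : ℕ)) hi
  rw [finset_sum_coeff] at this
  simp only [coeff_C_mul, coeff_X_pow] at this
  rwa [Finset.sum_eq_single i (fun j _ hj => by
      rw [if_neg, mul_zero]
      intro hc
      exact hj (Fin.ext (by omega))) (by simp), if_pos rfl, mul_one] at this

lemma Gmap_range (t : ℕ) (ht : t ≤ m * r - r + 1) :
    LinearMap.range (Gmap m r t) = (Ideal.span {Bmod.w m r ^ t}).restrictScalars ℂ := by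
  apply le_antisymm
  · rintro _ ⟨a, rfl⟩
    rw [Gmap, LinearMap.coe_mk, AddHom.coe_mk, Submodule.restrictScalars_mem]
    apply Submodule.sum_mem
    intro i _
    rw [smulB_eq]
    exact Ideal.mul_mem_left _ _
      (Ideal.mem_span_singleton'.mpr ⟨Bmod.w m r ^ (i : ℕ), by rw [← pow_add, add_comm]⟩)
  · rintro b hb
    rw [Submodule.restrictScalars_mem] at hb
    obtain ⟨q, rfl⟩ := (mem_span_w_pow b).mp hb
    set n := m * r - r + 1 - t with hn
    set q' := q %ₘ (X ^ n : Polynomial ℂ) with hq'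
    have hkey : Bmod.mk m r (X ^ t * q) = Bmod.mk m r (X ^ t * q') := by
      rw [mkB_eq_iff]
      refine ⟨q /ₘ (X ^ n), ?_⟩
      have h0 := Polynomial.modByMonic_add_div q (X ^ n)
      have : q - q' = X ^ n * (q /ₘ X ^ n) := by rw [hq']; linear_combination -h0
      rw [← mul_sub, this, ← mul_assoc, ← pow_add]
      congr 2
      omega
    rw [hkey]
    by_cases hz : q' = 0
    · rw [hz, mul_zero]
      exact ⟨0, by rw [map_zero]; exact (map_zero (Ideal.Quotient.mk _)).symm⟩
    · have hdeg : q'.natDegree < n := by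
        rw [natDegree_lt_iff_degree_lt hz]
        simpa using degree_modByMonic_lt q (monic_X_pow (R := ℂ) n)
      refine ⟨fun i => q'.coeff i, ?_⟩
      rw [Gmap_apply]
      congr 1
      conv_rhs => rw [q'.as_sum_range' n hdeg]
      rw [Finset.mul_sum, ← Fin.sum_univ_eq_sum_range (fun i => X ^ t * monomial i (q'.coeff i)) n]
      refine Finset.sum_congr rfl fun i _ => ?_
      rw [← C_mul_X_pow_eq_monomial, pow_add]
      ring

instance : FiniteDimensional ℂ (Bmod m r) := by
  apply Module.Finite.of_surjective (Gmap m r 0)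
  rw [← LinearMap.range_eq_top, Gmap_range 0 (Nat.zero_le _)]
  rw [pow_zero, Ideal.span_singleton_one]
  rfl

lemma finrank_span_w_pow (t : ℕ) (ht : t ≤ m * r - r + 1) :
    Module.finrank ℂ ((Ideal.span {Bmod.w m r ^ t}).restrictScalars ℂ) =
      m * r - r + 1 - t := by
  rw [← Gmap_range t ht, LinearMap.finrank_range_of_inj (Gmap_injective t)]
  simp

end S6


section Aside

variable {m r : ℕ} [NeZero m]

lemma mkA_eq_zero {p : Polynomial ℂ} :
    Amod.mk m p = 0 ↔ (X : Polynomial ℂ) ^ m ∣ p := by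
  exact Ideal.Quotient.eq_zero_iff_mem.trans Ideal.mem_span_singleton

lemma mkA_surj : Function.Surjective (Amod.mk m) := Ideal.Quotient.mk_surjective

/-- evaluation at 0 on A. -/
def epsA (m : ℕ) [NeZero m] : Amod m →+* ℂ :=
  Ideal.Quotient.lift (Ideal.span {(X : Polynomial ℂ) ^ m})
    ((aeval (0 : ℂ)).toRingHom)
    (by
      intro a ha
      rw [Ideal.mem_span_singleton] at ha
      obtain ⟨c, rfl⟩ := ha
      simp [zero_pow (NeZero.ne m)])

lemma epsA_mk (p : Polynomial ℂ) : epsA m (Amod.mk m p) = p.coeff 0 := by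
  show Ideal.Quotient.lift _ _ _ (Ideal.Quotient.mk _ p) = _
  rw [Ideal.Quotient.lift_mk]
  simp [coeff_zero_eq_eval_zero]

lemma algebraMapA_eq (c : ℂ) : algebraMap ℂ (Amod m) c = Amod.mk m (C c) := by
  rw [show (algebraMap ℂ (Amod m) c : Amod m)
      = algebraMap ℂ (Polynomial ℂ ⧸ Ideal.span {(X : Polynomial ℂ) ^ m}) c from rfl,
    IsScalarTower.algebraMap_apply ℂ (Polynomial ℂ), Ideal.Quotient.algebraMap_eq,
    Polynomial.algebraMap_eq]
  rfl

lemma epsA_algebraMap (c : ℂ) : epsA m (algebraMap ℂ (Amod m) c) = c := by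
  rw [algebraMapA_eq, epsA_mk, coeff_C_zero]

lemma epsA_zero_imp {x : Amod m} (h : epsA m x = 0) : ∃ q, x = Amod.mk m (X * q) := by
  obtain ⟨p, rfl⟩ := mkA_surj x
  rw [epsA_mk] at h
  obtain ⟨q, rfl⟩ := X_dvd_iff.mpr h
  exact ⟨q, rfl⟩

lemma mem_span_z_of_epsA_zero {x : Amod m} (h : epsA m x = 0) :
    x ∈ Ideal.span {Amod.z m} := by
  obtain ⟨q, rfl⟩ := epsA_zero_imp h
  refine Ideal.mem_span_singleton'.mpr ⟨Amod.mk m q, ?_⟩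
  show Ideal.Quotient.mk _ q * Ideal.Quotient.mk _ X = Ideal.Quotient.mk _ (X * q)
  exact (map_mul (Ideal.Quotient.mk (Ideal.span {(X : Polynomial ℂ) ^ m})) q X).symm.trans
    (by rw [mul_comm])

lemma nilpotent_of_epsA_zero {x : Amod m} (h : epsA m x = 0) : x ^ m = 0 := by
  obtain ⟨q, rfl⟩ := epsA_zero_imp h
  rw [show (Amod.mk m (X * q)) ^ m = Amod.mk m ((X * q) ^ m) from
      (map_pow (Ideal.Quotient.mk (Ideal.span {(X : Polynomial ℂ) ^ m})) _ m).symm,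
    mkA_eq_zero, mul_pow]
  exact Dvd.intro _ rfl

lemma isUnit_of_epsA_ne_zero {x : Amod m} (h : epsA m x ≠ 0) : IsUnit x := by
  have hn : IsNilpotent (x - algebraMap ℂ (Amod m) (epsA m x)) :=
    ⟨m, nilpotent_of_epsA_zero (by rw [map_sub, epsA_algebraMap, sub_self])⟩
  have hu : IsUnit (algebraMap ℂ (Amod m) (epsA m x)) :=
    (isUnit_iff_ne_zero.mpr h).map (algebraMap ℂ (Amod m))
  have := hn.isUnit_add_right_of_commute hu (Commute.all _ _)
  rwa [sub_add_cancel] at this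

lemma algebraMap_z (hr : 1 ≤ r) : algebraMap (Amod m) (Bmod m r) (Amod.z m) = Bmod.w m r ^ r := by
  show AtoB m r (Amod.mk m X) = _
  rw [AtoB, AtoB0, show Amod.mk m X = Ideal.Quotient.mk _ X from rfl]
  erw [Ideal.Quotient.lift_mk]
  rw [RingHom.comp_apply, if_pos hr]
  simp only [AlgHom.toRingHom_eq_coe, RingHom.coe_coe, Polynomial.aeval_X]
  exact (S6.w_pow r).symm

lemma sum_prim {ζ : ℂ} (hζ : IsPrimitiveRoot ζ r) (e : ℕ) :
    ∑ l ∈ Finset.range r, ζ ^ (l * e) = if r ∣ e then (r : ℂ) else 0 := by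
  have h1 : ∀ l, ζ ^ (l * e) = (ζ ^ e) ^ l := fun l => by rw [← pow_mul, mul_comm]
  simp_rw [h1]
  by_cases h : r ∣ e
  · rw [if_pos h]
    have : ζ ^ e = 1 := (hζ.pow_eq_one_iff_dvd e).mpr h
    simp [this]
  · rw [if_neg h, geom_sum_eq (fun h1 => h ((hζ.pow_eq_one_iff_dvd e).mp h1)) r,
      ← pow_mul, mul_comm e r, pow_mul, hζ.pow_eq_one, one_pow, sub_self, zero_div]

lemma dvd_iff_eq {r : ℕ} (hr : 1 ≤ r) {k k0 : ℕ} (hk : k < r) (hk0 : k0 < r) :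
    r ∣ (k0 + (r - 1) * k) ↔ k = k0 := by
  rw [← ZMod.natCast_eq_zero_iff]
  push_cast
  have hcast : ((r : ℕ) : ZMod r) = 0 := ZMod.natCast_self r
  have hr1 : (((r - 1 : ℕ)) : ZMod r) = -1 := by
    rw [Nat.cast_sub hr, hcast, Nat.cast_one, zero_sub]
  rw [hr1]
  constructor
  · intro hc
    have : ((k0 : ZMod r)) = (k : ZMod r) := by linear_combination hc
    rw [ZMod.natCast_eq_natCast_iff'] at this
    rw [Nat.mod_eq_of_lt hk0, Nat.mod_eq_of_lt hk] at this
    omega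
  · rintro rfl
    ring

end Aside



section BasisE

open S6

variable {m r : ℕ} [NeZero m]

lemma nontrivialA (hm : 1 ≤ m) : Nontrivial (Amod m) := by
  refine ⟨Amod.mk m 1, 0, fun h => ?_⟩
  have := mkA_eq_zero.mp h
  have hX : (X : Polynomial ℂ) ∣ 1 := dvd_trans (dvd_pow_self X (by omega)) this
  rw [X_dvd_iff] at hX
  simp at hX

lemma coeff_sum_C_mul_X_pow (c : Fin r → ℂ) (k : Fin r) :
    (∑ i : Fin r, C (c i) * X ^ (i : ℕ)).coeff (k : ℕ) = c k := by
  rw [finset_sum_coeff]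
  simp only [coeff_C_mul, coeff_X_pow]
  rw [Finset.sum_eq_single k (fun j _ hj => by
      rw [if_neg, mul_zero]
      intro hc
      exact hj (Fin.ext (by omega))) (by simp), if_pos rfl, mul_one]

lemma sum_algC_w (c : Fin r → ℂ) :
    ∑ k : Fin r, algebraMap ℂ (Bmod m r) (c k) * Bmod.w m r ^ (k : ℕ)
      = Bmod.mk m r (∑ k : Fin r, C (c k) * X ^ (k : ℕ)) := by
  rw [mkB_sum]
  refine Finset.sum_congr rfl fun k _ => ?_
  rw [algebraMapB_eq, w_pow, mkB_mul]

lemma coeffs_zero_of_mem_span (hm : 2 ≤ m) (hr : 1 ≤ r) {c : Fin r → ℂ}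
    (h : (∑ k : Fin r, algebraMap ℂ (Bmod m r) (c k) * Bmod.w m r ^ (k : ℕ))
        ∈ Ideal.span {Bmod.w m r ^ r}) :
    ∀ k, c k = 0 := by
  have hrN : r ≤ m * r - r + 1 := by
    have : 2 * r ≤ m * r := Nat.mul_le_mul_right r hm
    omega
  rw [sum_algC_w] at h
  obtain ⟨q, hq⟩ := (mem_span_w_pow _).mp h
  rw [mkB_eq_iff] at hq
  obtain ⟨s, hs⟩ := hq
  have hdvd : (X : Polynomial ℂ) ^ r ∣ ∑ k : Fin r, C (c k) * X ^ (k : ℕ) := by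
    have h1 : (X : Polynomial ℂ) ^ r ∣ X ^ (m * r - r + 1) * s :=
      Dvd.dvd.mul_right (pow_dvd_pow X hrN) s
    have h2 : (∑ k : Fin r, C (c k) * X ^ (k : ℕ))
        = X ^ (m * r - r + 1) * s + X ^ r * q := by linear_combination hs
    rw [h2]
    exact dvd_add h1 (Dvd.intro _ rfl)
  rw [X_pow_dvd_iff] at hdvd
  intro k
  rw [← coeff_sum_C_mul_X_pow c k]
  exact hdvd _ k.2

/-- `e` is a basis, given any `A`-linear map to `B` sending `e k` to `w ^ k`. -/
lemma exists_basis_e (hm : 2 ≤ m) (hr : 1 ≤ r)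
    {V : Type*} [AddCommGroup V] [Module (Amod m) V]
    [Module.Finite (Amod m) V] [Module.Free (Amod m) V]
    (hrank : Module.finrank (Amod m) V = r)
    (φ : V →ₗ[Amod m] Bmod m r) (e : Fin r → V)
    (he : ∀ k : Fin r, φ (e k) = Bmod.w m r ^ (k : ℕ)) :
    ∃ eb : Module.Basis (Fin r) (Amod m) V, ⇑eb = e := by
  haveI := nontrivialA (m := m) (by omega)
  let b0 := Module.Free.chooseBasis (Amod m) V
  have hcard : Fintype.card (Module.Free.ChooseBasisIndex (Amod m) V) = r := by
    rw [← Module.finrank_eq_card_chooseBasisIndex, hrank]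
  let f : Module.Basis (Fin r) (Amod m) V := b0.reindex (Fintype.equivFinOfCardEq hcard)
  have hdet : IsUnit (f.det e) := by
    rw [Module.Basis.det_apply]
    apply isUnit_of_epsA_ne_zero
    rw [RingHom.map_det]
    intro h0
    obtain ⟨cv, hcv, hc0⟩ := (Matrix.exists_mulVec_eq_zero_iff).mpr h0
    apply hcv
    funext k
    set v : V := ∑ k : Fin r, (algebraMap ℂ (Amod m) (cv k)) • e k with hv
    have hvmem : v ∈ (Ideal.span {Amod.z m}) • (⊤ : Submodule (Amod m) V) := by
      have hrepr : v = ∑ j : Fin r, (f.repr v j) • f j := (f.sum_repr v).symm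
      rw [hrepr]
      refine Submodule.sum_mem _ fun j _ => Submodule.smul_mem_smul ?_ trivial
      apply mem_span_z_of_epsA_zero
      have hvj : f.repr v j = ∑ i : Fin r, algebraMap ℂ (Amod m) (cv i) * f.repr (e i) j := by
        rw [hv, map_sum]
        simp [Finsupp.smul_apply, Algebra.smul_def]
      rw [hvj, map_sum]
      have := congrFun hc0 j
      rw [Matrix.mulVec, dotProduct, Pi.zero_apply] at this
      rw [← this]
      refine Finset.sum_congr rfl fun i _ => ?_
      rw [map_mul, epsA_algebraMap, RingHom.mapMatrix_apply, Matrix.map_apply,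
        Module.Basis.toMatrix_apply, mul_comm]
    have hle : (Ideal.span {Amod.z m}) • (⊤ : Submodule (Amod m) V) ≤
        Submodule.comap φ ((Ideal.span {Bmod.w m r ^ r}).restrictScalars (Amod m)) := by
      refine Submodule.smul_le.mpr fun a ha v' _ => ?_
      simp only [Submodule.mem_comap, map_smul, Submodule.restrictScalars_mem]
      obtain ⟨t, ht⟩ := Ideal.mem_span_singleton'.mp ha
      rw [Algebra.smul_def, ← ht, map_mul, algebraMap_z hr]
      exact Ideal.mem_span_singleton'.mpr
        ⟨algebraMap (Amod m) (Bmod m r) t * φ v', by ring⟩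
    have hφv : φ v ∈ Ideal.span {Bmod.w m r ^ r} := hle hvmem
    have hφv2 : φ v = ∑ k : Fin r, algebraMap ℂ (Bmod m r) (cv k) * Bmod.w m r ^ (k : ℕ) := by
      rw [hv, map_sum]
      refine Finset.sum_congr rfl fun i _ => ?_
      rw [map_smul, he, Algebra.smul_def, ← IsScalarTower.algebraMap_apply]
    rw [hφv2] at hφv
    exact coeffs_zero_of_mem_span hm hr hφv k
  obtain ⟨hli, hsp⟩ := (Module.Basis.is_basis_iff_det f).mpr hdet
  exact ⟨Module.Basis.mk hli hsp.ge, Module.Basis.coe_mk hli hsp.ge⟩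

end BasisE



/-- Equivalence between a pi submodule and the product of the submodules. -/
def piSubEquiv {R : Type*} [Ring R] {ι : Type*} {M : ι → Type*} [∀ i, AddCommGroup (M i)]
    [∀ i, Module R (M i)] (p : ∀ i, Submodule R (M i)) :
    ↥(Submodule.pi Set.univ p) ≃ₗ[R] ((i : ι) → ↥(p i)) where
  toFun x i := ⟨x.1 i, x.2 i (Set.mem_univ i)⟩
  map_add' x y := rfl
  map_smul' c x := rfl
  invFun y := ⟨fun i => (y i).1, fun i _ => (y i).2⟩
  left_inv x := rfl
  right_inv y := rfl


open S6 in
/-- Kernel description for the Galois-twisted quotient maps: the intersection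
`⋂ₗ ker(σ^{−l} ∘ ϖ₀ ∘ (id ⊗ σˡ))` consists of the sums `Σₖ bₖ ⊗ e′ₖ` with
`bₖ ∈ (w^{N−k})`, and has `ℂ`-dimension `r(r−1)/2`. -/
theorem statement6 (m r : ℕ) (hm : 2 ≤ m) (hr : 1 ≤ r) [NeZero m]
    (V : Type*) [AddCommGroup V] [Module (Amod m) V]
    [Module.Finite (Amod m) V] [Module.Free (Amod m) V]
    (hrank : Module.finrank (Amod m) V = r)
    (ϖ : Bmod m r ⊗[Amod m] V →ₗ[Bmod m r] Bmod m r)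
    (hϖ : Function.Surjective ϖ)
    (hϖV : Function.Surjective (fun a : V => ϖ ((1 : Bmod m r) ⊗ₜ a)))
    (e : Fin r → V)
    (he : ∀ k : Fin r, ϖ ((1 : Bmod m r) ⊗ₜ e k) = Bmod.w m r ^ (k : ℕ))
    (ζ : ℂ) (hζ : IsPrimitiveRoot ζ r)
    (σ : Bmod m r ≃ₐ[Amod m] Bmod m r)
    (hσ : σ (Bmod.w m r) = algebraMap ℂ (Bmod m r) ζ * Bmod.w m r)
    (F : Fin r → (Bmod m r ⊗[Amod m] V →ₗ[ℂ] Bmod m r))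
    (hF : ∀ (l : Fin r) (x : Bmod m r ⊗[Amod m] V),
      F l x = (σ⁻¹ ^ (l : ℕ)) (ϖ (LinearMap.rTensor V (σ ^ (l : ℕ)).toLinearMap x))) :
    (↑(⨅ l : Fin r, LinearMap.ker (F l)) : Set (Bmod m r ⊗[Amod m] V)) =
      {x | ∃ b : Fin r → Bmod m r,
        (∀ k : Fin r, b k ∈ Ideal.span {Bmod.w m r ^ (m * r - r + 1 - (k : ℕ))}) ∧
        x = ∑ k : Fin r, b k ⊗ₜ e k}
    ∧ Module.finrank ℂ ↥(⨅ l : Fin r, LinearMap.ker (F l)) = r * (r - 1) / 2 := by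
  classical
  have hrN : r ≤ m * r - r + 1 := by
    have : 2 * r ≤ m * r := Nat.mul_le_mul_right r hm
    omega
  -- `e` is a basis of `V`
  set φ : V →ₗ[Amod m] Bmod m r :=
    (ϖ.restrictScalars (Amod m)).comp ((TensorProduct.mk (Amod m) (Bmod m r) V) 1) with hφdef
  have hφe : ∀ k : Fin r, φ (e k) = Bmod.w m r ^ (k : ℕ) := fun k => he k
  obtain ⟨eb, hebe⟩ := exists_basis_e hm hr hrank φ e hφe
  let ebc : Module.Basis (Fin r) (Bmod m r) (Bmod m r ⊗[Amod m] V) := eb.baseChange (Bmod m r)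
  have hebc : ∀ k, ebc k = (1 : Bmod m r) ⊗ₜ[Amod m] e k := fun k => by
    rw [show ebc k = eb.baseChange (Bmod m r) k from rfl, Module.Basis.baseChange_apply, hebe]
  have hxrepr : ∀ x : Bmod m r ⊗[Amod m] V,
      x = ∑ k : Fin r, (ebc.repr x k) ⊗ₜ[Amod m] e k := by
    intro x
    conv_lhs => rw [← ebc.sum_repr x]
    refine Finset.sum_congr rfl fun k _ => ?_
    rw [hebc, TensorProduct.smul_tmul', smul_eq_mul, mul_one]
  -- the root of unity in B
  set u : Bmod m r := algebraMap ℂ (Bmod m r) ζ with hu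
  have hur : u ^ r = 1 := by rw [hu, ← map_pow, hζ.pow_eq_one, map_one]
  have hcomm : ∀ (τ : Bmod m r ≃ₐ[Amod m] Bmod m r) (t : ℕ) (x : Bmod m r),
      τ (u ^ t * x) = u ^ t * τ x := by
    intro τ t x
    have h1 : u ^ t = algebraMap (Amod m) (Bmod m r) (algebraMap ℂ (Amod m) (ζ ^ t)) := by
      rw [← IsScalarTower.algebraMap_apply, hu, map_pow]
    rw [h1, map_mul, AlgEquiv.commutes]
  have hσw : ∀ l : ℕ, (σ ^ l) (Bmod.w m r) = u ^ l * Bmod.w m r := by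
    intro l
    induction l with
    | zero => simp
    | succ n ih =>
      rw [pow_succ, AlgEquiv.mul_apply, hσ,
        show u * Bmod.w m r = u ^ 1 * Bmod.w m r from by rw [pow_one]]
      rw [hcomm (σ ^ n) 1 (Bmod.w m r), pow_one, ih]
      ring
  have hσwk : ∀ (l k : ℕ), (σ ^ l) (Bmod.w m r ^ k) = u ^ (l * k) * Bmod.w m r ^ k := by
    intro l k
    rw [map_pow, hσw, mul_pow, ← pow_mul]
  have htwist : ∀ (l k : ℕ) (b : Bmod m r),
      (σ ^ l) b * Bmod.w m r ^ k = u ^ ((r - 1) * l * k) * (σ ^ l) (b * Bmod.w m r ^ k) := by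
    intro l k b
    rw [map_mul, hσwk]
    have harith : (r - 1) * l * k + l * k = r * (l * k) := by
      obtain ⟨r', rfl⟩ := Nat.exists_eq_add_of_le hr
      simp only [Nat.add_sub_cancel_left]
      ring
    have huc : u ^ ((r - 1) * l * k) * u ^ (l * k) = 1 := by
      rw [← pow_add, harith, pow_mul, hur, one_pow]
    rw [show u ^ ((r - 1) * l * k) * ((σ ^ l) b * (u ^ (l * k) * Bmod.w m r ^ k))
        = (u ^ ((r - 1) * l * k) * u ^ (l * k)) * ((σ ^ l) b * Bmod.w m r ^ k) from by ring,
      huc, one_mul]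
  have hGl : ∀ (l : Fin r) (b : Fin r → Bmod m r),
      ϖ (LinearMap.rTensor V (σ ^ (l : ℕ)).toLinearMap (∑ k : Fin r, b k ⊗ₜ[Amod m] e k))
        = ∑ k : Fin r, (σ ^ (l : ℕ)) (b k) * Bmod.w m r ^ (k : ℕ) := by
    intro l b
    rw [map_sum, map_sum]
    refine Finset.sum_congr rfl fun k _ => ?_
    rw [LinearMap.rTensor_tmul]
    have h2 : ((σ ^ (l : ℕ)).toLinearMap (b k)) ⊗ₜ[Amod m] e k
        = ((σ ^ (l : ℕ)) (b k)) • ((1 : Bmod m r) ⊗ₜ[Amod m] e k) := by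
      rw [TensorProduct.smul_tmul', smul_eq_mul, mul_one]
      rfl
    rw [h2, map_smul, he, smul_eq_mul]
  -- the central membership criterion
  have hker_iff : ∀ x : Bmod m r ⊗[Amod m] V,
      (∀ l : Fin r, F l x = 0) ↔
        ∀ k : Fin r, (ebc.repr x k) * Bmod.w m r ^ (k : ℕ) = 0 := by
    intro x
    constructor
    · intro hl k0
      set c : Fin r → Bmod m r := fun k => ebc.repr x k with hc
      have hSl : ∀ l : Fin r, ∑ k : Fin r,
          u ^ ((r - 1) * (l : ℕ) * (k : ℕ)) * (c k * Bmod.w m r ^ (k : ℕ)) = 0 := by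
        intro l
        have h1 : ϖ (LinearMap.rTensor V (σ ^ (l : ℕ)).toLinearMap x) = 0 := by
          have h2 := hl l
          rw [hF] at h2
          exact (AlgEquiv.injective (σ⁻¹ ^ (l : ℕ))) (by rw [h2, map_zero])
        have h3 : ∑ k : Fin r, (σ ^ (l : ℕ)) (c k) * Bmod.w m r ^ (k : ℕ) = 0 := by
          have h4 := hGl l c
          rw [← hxrepr x] at h4
          rw [← h4]
          exact h1
        have h5 : ∑ k : Fin r,
            u ^ ((r - 1) * (l : ℕ) * (k : ℕ)) * ((σ ^ (l : ℕ)) (c k * Bmod.w m r ^ (k : ℕ))) = 0 := by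
          rw [← h3]
          exact Finset.sum_congr rfl fun k _ => (htwist (l : ℕ) (k : ℕ) (c k)).symm
        have h6 := congrArg (σ ^ (l : ℕ)).symm h5
        rw [map_sum, map_zero] at h6
        rw [← h6]
        refine Finset.sum_congr rfl fun k _ => ?_
        rw [hcomm ((σ ^ (l : ℕ)).symm), AlgEquiv.symm_apply_apply]
      have hsum : ∑ l : Fin r, ∑ k : Fin r, u ^ ((l : ℕ) * (k0 : ℕ))
          * (u ^ ((r - 1) * (l : ℕ) * (k : ℕ)) * (c k * Bmod.w m r ^ (k : ℕ))) = 0 := by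
        refine Finset.sum_eq_zero fun l _ => ?_
        rw [← Finset.mul_sum, hSl l, mul_zero]
      rw [Finset.sum_comm] at hsum
      have hswap : ∀ k : Fin r, ∑ l : Fin r, u ^ ((l : ℕ) * (k0 : ℕ))
          * (u ^ ((r - 1) * (l : ℕ) * (k : ℕ)) * (c k * Bmod.w m r ^ (k : ℕ)))
          = (∑ l : Fin r, u ^ ((l : ℕ) * ((k0 : ℕ) + (r - 1) * (k : ℕ))))
            * (c k * Bmod.w m r ^ (k : ℕ)) := by
        intro k
        rw [Finset.sum_mul]
        refine Finset.sum_congr rfl fun l _ => ?_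
        rw [show (l : ℕ) * ((k0 : ℕ) + (r - 1) * (k : ℕ))
            = (l : ℕ) * (k0 : ℕ) + (r - 1) * (l : ℕ) * (k : ℕ) from by ring, pow_add]
        ring
      rw [Finset.sum_congr rfl (fun k _ => hswap k)] at hsum
      have hinner : ∀ k : Fin r, (∑ l : Fin r, u ^ ((l : ℕ) * ((k0 : ℕ) + (r - 1) * (k : ℕ))))
          = if k = k0 then algebraMap ℂ (Bmod m r) ((r : ℂ)) else 0 := by
        intro k
        have h7 : ∑ l : Fin r, u ^ ((l : ℕ) * ((k0 : ℕ) + (r - 1) * (k : ℕ)))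
            = algebraMap ℂ (Bmod m r)
              (∑ l ∈ Finset.range r, ζ ^ (l * ((k0 : ℕ) + (r - 1) * (k : ℕ)))) := by
          rw [map_sum, ← Fin.sum_univ_eq_sum_range
            (fun l => algebraMap ℂ (Bmod m r) (ζ ^ (l * ((k0 : ℕ) + (r - 1) * (k : ℕ))))) r]
          exact Finset.sum_congr rfl fun l _ => by rw [hu, ← map_pow]
        rw [h7, sum_prim hζ]
        by_cases hkk : k = k0
        · subst hkk
          rw [if_pos ((dvd_iff_eq hr k.2 k.2).mpr rfl), if_pos rfl]
        · rw [if_neg (fun hdvd => hkk (Fin.ext ((dvd_iff_eq hr k.2 k0.2).mp hdvd))),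
            if_neg hkk, map_zero]
      rw [Finset.sum_congr rfl (fun k _ => by rw [hinner k])] at hsum
      rw [Finset.sum_eq_single k0 (fun j _ hj => by rw [if_neg hj, zero_mul])
        (fun h => absurd (Finset.mem_univ k0) h), if_pos rfl] at hsum
      have hrC : (r : ℂ) ≠ 0 := Nat.cast_ne_zero.mpr (by omega)
      have h9 := congrArg (fun y => algebraMap ℂ (Bmod m r) ((r : ℂ)⁻¹) * y) hsum
      simp only [mul_zero] at h9
      rw [← mul_assoc, ← map_mul, inv_mul_cancel₀ hrC, map_one, one_mul] at h9
      exact h9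
    · intro hk l
      rw [hF]
      have h0 : ϖ (LinearMap.rTensor V (σ ^ (l : ℕ)).toLinearMap x) = 0 := by
        conv_lhs => rw [hxrepr x]
        rw [hGl l]
        refine Finset.sum_eq_zero fun k _ => ?_
        rw [htwist (l : ℕ) (k : ℕ), hk k, map_zero, mul_zero]
      rw [h0, map_zero]
  constructor
  · ext x
    simp only [SetLike.mem_coe, Submodule.mem_iInf, LinearMap.mem_ker, Set.mem_setOf_eq]
    rw [hker_iff x]
    constructor
    · intro hk
      refine ⟨fun k => ebc.repr x k, fun k => ?_, hxrepr x⟩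
      exact (mul_w_pow_eq_zero_iff (le_trans (le_of_lt k.2) hrN) _).mp (hk k)
    · rintro ⟨b, hb, rfl⟩ k
      have hb2 : ∑ i : Fin r, b i ⊗ₜ[Amod m] e i = ∑ i : Fin r, b i • ebc i :=
        Finset.sum_congr rfl fun i _ => by
          rw [hebc, TensorProduct.smul_tmul', smul_eq_mul, mul_one]
      rw [hb2, Module.Basis.repr_sum_self]
      exact (mul_w_pow_eq_zero_iff (le_trans (le_of_lt k.2) hrN) _).mpr (hb k)
  · let p : Fin r → Submodule ℂ (Bmod m r) := fun k =>
      (Ideal.span {Bmod.w m r ^ (m * r - r + 1 - (k : ℕ))}).restrictScalars ℂ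
    let Φ : (Bmod m r ⊗[Amod m] V) ≃ₗ[ℂ] (Fin r → Bmod m r) :=
      (ebc.equivFun : (Bmod m r ⊗[Amod m] V) ≃ₗ[Bmod m r] (Fin r → Bmod m r)).restrictScalars ℂ
    have hΦ : ∀ x k, Φ x k = ebc.repr x k := fun x k => by
      rw [show Φ x = ebc.equivFun x from rfl, Module.Basis.equivFun_apply]
    have hmap : Submodule.map (Φ : (Bmod m r ⊗[Amod m] V) →ₗ[ℂ] (Fin r → Bmod m r))
        (⨅ l : Fin r, LinearMap.ker (F l)) = Submodule.pi Set.univ p := by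
      ext y
      rw [Submodule.mem_map, Submodule.mem_pi]
      constructor
      · rintro ⟨x, hx, rfl⟩ k _
        have h1 : ∀ l : Fin r, F l x = 0 := by
          intro l
          have := Submodule.mem_iInf (fun l : Fin r => LinearMap.ker (F l)) |>.mp hx l
          rwa [LinearMap.mem_ker] at this
        have h2 := (hker_iff x).mp h1 k
        show Φ x k ∈ p k
        rw [hΦ]
        exact (mul_w_pow_eq_zero_iff (le_trans (le_of_lt k.2) hrN) _).mp h2
      · intro hy
        refine ⟨Φ.symm y, ?_, Φ.apply_symm_apply y⟩
        rw [Submodule.mem_iInf]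
        intro l
        rw [LinearMap.mem_ker]
        refine (hker_iff (Φ.symm y)).mpr (fun k => ?_) l
        have h3 : (ebc.repr (Φ.symm y)) k = y k := by
          rw [← hΦ, Φ.apply_symm_apply]
        rw [h3]
        exact (mul_w_pow_eq_zero_iff (le_trans (le_of_lt k.2) hrN) _).mpr (hy k (Set.mem_univ k))
    have hfr := LinearEquiv.finrank_map_eq Φ (⨅ l : Fin r, LinearMap.ker (F l))
    rw [← hfr, hmap, (piSubEquiv p).finrank_eq, Module.finrank_pi_fintype]
    have hpk : ∀ k : Fin r, Module.finrank ℂ (p k) = (k : ℕ) := by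
      intro k
      have h4 := finrank_span_w_pow (m := m) (r := r) (m * r - r + 1 - (k : ℕ)) (by omega)
      rw [show p k = (Ideal.span {Bmod.w m r ^ (m * r - r + 1 - (k : ℕ))}).restrictScalars ℂ
          from rfl, h4]
      have := k.2
      omega
    rw [Finset.sum_congr rfl (fun k _ => hpk k),
      show (∑ k : Fin r, (k : ℕ)) = ∑ i ∈ Finset.range r, i from
        Fin.sum_univ_eq_sum_range (fun i => i) r,
      Finset.sum_range_id]

end
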